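/- A Lie algebra of polynomial vector fields on ℝⁿ generated by finitely many weighted-homogeneous vector fields of nonholonomic degree 0 or −1 is finite dimensional: every element is a polynomial vector field whose coefficient of ∂/∂xⱼ has total weighted degree at most wⱼ, hence lies in a fixed finite-dimensional space of polynomial vector fields. -/

import Mathlib

open MvPolynomial

/-- Polynomial vector fields on ℝⁿ: an `n`-tuple of polynomial coefficients. -/
noncomputable def bracketVF {n : ℕ} (X Y : Fin n → MvPolynomial (Fin n) ℝ) :
    Fin n → MvPolynomial (Fin n) ℝ :=
  fun j => ∑ k : Fin n,
    (X k * MvPolynomial.pderiv k (Y j) - Y k * MvPolynomial.pderiv k (X j))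

/-- `X` is weighted-homogeneous of nonholonomic degree `s` for the weights `w`:
each coefficient `X j` is weighted-homogeneous of weighted degree `w j + s`. -/
def IsWHomVF {n : ℕ} (w : Fin n → ℕ) (s : ℤ)
    (X : Fin n → MvPolynomial (Fin n) ℝ) : Prop :=
  ∀ j, MvPolynomial.IsWeightedHomogeneous (fun i => (w i : ℤ)) (X j) ((w j : ℤ) + s)

/-- Polynomials all of whose monomials have `w`-weight at most `m`. -/
noncomputable def degLE {n : ℕ} (w : Fin n → ℕ) (m : ℕ) :
    Submodule ℝ (MvPolynomial (Fin n) ℝ) where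
  carrier := {p | ∀ d ∈ p.support, Finsupp.weight w d ≤ m}
  add_mem' := by
    classical
    intro p q hp hq d hd
    rcases Finset.mem_union.mp (Finsupp.support_add hd) with h | h
    · exact hp d h
    · exact hq d h
  zero_mem' := by simp
  smul_mem' := by
    intro c p hp d hd
    exact hp d (Finsupp.support_smul hd)

lemma mem_degLE {n : ℕ} {w : Fin n → ℕ} {m : ℕ} {p : MvPolynomial (Fin n) ℝ} :
    p ∈ degLE w m ↔ ∀ d ∈ p.support, Finsupp.weight w d ≤ m := Iff.rfl

lemma degLE_finiteDimensional {n : ℕ} (w : Fin n → ℕ) (hw : ∀ i, 1 ≤ w i) (m : ℕ) :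
    FiniteDimensional ℝ (degLE w m) := by
  have hle : degLE w m ≤ MvPolynomial.restrictTotalDegree (Fin n) ℝ m := by
    intro p hp
    rw [MvPolynomial.mem_restrictTotalDegree]
    apply Finset.sup_le
    intro d hd
    refine le_trans ?_ (hp d hd)
    rw [Finsupp.weight_apply]
    rw [Finsupp.sum, Finsupp.sum]
    apply Finset.sum_le_sum
    intro i _
    have := hw i
    simp only [smul_eq_mul]
    nlinarith
  exact Submodule.finiteDimensional_of_le hle

lemma mul_mem_degLE {n : ℕ} {w : Fin n → ℕ} {a b : ℕ} {p q : MvPolynomial (Fin n) ℝ}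
    (hp : p ∈ degLE w a) (hq : q ∈ degLE w b) : p * q ∈ degLE w (a + b) := by
  classical
  intro d hd
  have := MvPolynomial.support_mul p q hd
  rw [Finset.mem_add] at this
  obtain ⟨d1, hd1, d2, hd2, rfl⟩ := this
  rw [map_add]
  exact add_le_add (hp d1 hd1) (hq d2 hd2)

lemma pderiv_mem_degLE {n : ℕ} {w : Fin n → ℕ} {m : ℕ} {p : MvPolynomial (Fin n) ℝ}
    (k : Fin n) (hp : p ∈ degLE w m) :
    ∀ d ∈ (MvPolynomial.pderiv k p).support, Finsupp.weight w d + w k ≤ m := by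
  classical
  intro d hd
  -- express pderiv of p as sum of pderivs of the monomials of p
  have hrep : MvPolynomial.pderiv k p
      = ∑ v ∈ p.support, MvPolynomial.pderiv k (MvPolynomial.monomial v (p.coeff v)) := by
    conv_lhs => rw [p.as_sum]
    rw [map_sum]
  rw [hrep] at hd
  obtain ⟨v, hv, hdv⟩ := Finset.mem_biUnion.mp (MvPolynomial.support_sum hd)
  rw [MvPolynomial.pderiv_monomial] at hdv
  have hvk : v k ≠ 0 := by
    intro h
    simp [h] at hdv
  have hd_eq : d = v - Finsupp.single k 1 :=
    Finset.mem_singleton.mp (MvPolynomial.support_monomial_subset hdv)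
  have hsub : v - Finsupp.single k 1 + Finsupp.single k 1 = v := by
    apply tsub_add_cancel_of_le
    rw [Finsupp.single_le_iff]
    omega
  have hws : Finsupp.weight w (Finsupp.single k 1) = w k := by
    rw [Finsupp.weight_apply, Finsupp.sum_single_index] <;> simp
  have : Finsupp.weight w d + w k = Finsupp.weight w v := by
    rw [hd_eq, ← hws, ← map_add, hsub]
  rw [this]
  exact hp v hv

theorem stmt_6 {n : ℕ} (w : Fin n → ℕ) (hw : ∀ i, 1 ≤ w i)
    (k : ℕ) (X : Fin k → (Fin n → MvPolynomial (Fin n) ℝ))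
    (hX : ∀ i, IsWHomVF w 0 (X i) ∨ IsWHomVF w (-1) (X i)) :
    ∃ W : Submodule ℝ (Fin n → MvPolynomial (Fin n) ℝ),
      FiniteDimensional ℝ W ∧ (∀ i, X i ∈ W) ∧
      ∀ Y ∈ W, ∀ Z ∈ W, bracketVF Y Z ∈ W := by
  classical
  refine ⟨Submodule.pi Set.univ (fun j => degLE w (w j)), ?_, ?_, ?_⟩
  · -- finite dimensionality
    have : ∀ j, FiniteDimensional ℝ (degLE w (w j)) := fun j => degLE_finiteDimensional w hw _
    let f : (Submodule.pi Set.univ (fun j => degLE w (w j))) →ₗ[ℝ]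
        (∀ j, degLE w (w j)) :=
      { toFun := fun x j => ⟨x.1 j, x.2 j (Set.mem_univ j)⟩
        map_add' := fun x y => rfl
        map_smul' := fun c x => rfl }
    have hinj : Function.Injective f := by
      intro x y hxy
      apply Subtype.ext
      funext j
      exact congrArg Subtype.val (congrFun hxy j)
    exact FiniteDimensional.of_injective f hinj
  · -- generators belong
    intro i j _
    intro d hd
    rcases hX i with h | h
    · have := h j (MvPolynomial.mem_support_iff.mp hd)
      have hcast : ((Finsupp.weight w d : ℕ) : ℤ)
          = Finsupp.weight (fun i => (w i : ℤ)) d := by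
        rw [Finsupp.weight_apply, Finsupp.weight_apply, Finsupp.sum, Finsupp.sum]
        push_cast
        rfl
      omega
    · have := h j (MvPolynomial.mem_support_iff.mp hd)
      have hcast : ((Finsupp.weight w d : ℕ) : ℤ)
          = Finsupp.weight (fun i => (w i : ℤ)) d := by
        rw [Finsupp.weight_apply, Finsupp.weight_apply, Finsupp.sum, Finsupp.sum]
        push_cast
        rfl
      omega
  · -- closed under bracket
    intro Y hY Z hZ j _
    apply Submodule.sum_mem
    intro l _
    apply Submodule.sub_mem
    · intro d hd
      have := MvPolynomial.support_mul (Y l) (MvPolynomial.pderiv l (Z j)) hd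
      rw [Finset.mem_add] at this
      obtain ⟨d1, hd1, d2, hd2, rfl⟩ := this
      have h1 := hY l (Set.mem_univ l) d1 hd1
      have h2 := pderiv_mem_degLE l (hZ j (Set.mem_univ j)) d2 hd2
      rw [map_add]
      omega
    · intro d hd
      have := MvPolynomial.support_mul (Z l) (MvPolynomial.pderiv l (Y j)) hd
      rw [Finset.mem_add] at this
      obtain ⟨d1, hd1, d2, hd2, rfl⟩ := this
      have h1 := hZ l (Set.mem_univ l) d1 hd1
      have h2 := pderiv_mem_degLE l (hY j (Set.mem_univ j)) d2 hd2
      rw [map_add]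
      omega
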